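/- Let Ω = (−1,1) and for t ∈ [1/2, 1] define u_t : [−1,1] → ℝ by u_t(x) = |x+t| − t for x ∈ [−1,−1/2], u_t(x) = x for x ∈ (−1/2, 1/2), and u_t(x) = t − |x−t| for x ∈ [1/2, 1]. Then each u_t is 1-Lipschitz on [−1,1], satisfies max u_t + min u_t = 0, and is a viscosity solution of min{|u'| − 1, −u''(u')²} = 0 on (0,1) and max{1 − |u'|, −u''(u')²} = 0 on (−1,0). In particular the limiting PDE admits infinitely many solutions. -/

import Mathlib

open Set Filter Topology

/-- The family of solutions of the limiting PDE on `(-1,1)`. -/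
noncomputable def uT (t x : ℝ) : ℝ :=
  if x ≤ -(1/2) then |x + t| - t else if x < 1/2 then x else t - |x - t|

private lemma uT_eq {t : ℝ} (ht1 : 1/2 ≤ t) (x : ℝ) :
    uT t x = min (max x (-x - 2*t)) (2*t - x) := by
  unfold uT
  split_ifs with h1 h2
  · rcases abs_cases (x + t) with ⟨h3, h4⟩ | ⟨h3, h4⟩
    · rw [h3, max_eq_left (by linarith), min_eq_left (by linarith)]; ring
    · rw [h3, max_eq_right (by linarith), min_eq_left (by linarith)]; ring
  · push_neg at h1
    rw [max_eq_left (by linarith), min_eq_left (by linarith)]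
  · push_neg at h1 h2
    rcases abs_cases (x - t) with ⟨h3, h4⟩ | ⟨h3, h4⟩
    · rw [h3, max_eq_left (by linarith), min_eq_right (by linarith)]; ring
    · rw [h3, max_eq_left (by linarith), min_eq_left (by linarith)]; ring

private lemma uT_lip {t : ℝ} (ht1 : 1/2 ≤ t) (x y : ℝ) : |uT t x - uT t y| ≤ |x - y| := by
  rw [uT_eq ht1, uT_eq ht1]
  refine le_trans (abs_min_sub_min_le_max _ _ _ _) (max_le (le_trans
    (abs_max_sub_max_le_max _ _ _ _) (max_le le_rfl ?_)) ?_)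
  · rw [show -x - 2*t - (-y - 2*t) = -(x - y) by ring, abs_neg]
  · rw [show 2*t - x - (2*t - y) = -(x - y) by ring, abs_neg]

private lemma deriv_le_right {φ : ℝ → ℝ} {x₀ c : ℝ} (hd : DifferentiableAt ℝ φ x₀)
    (h : ∀ᶠ x in 𝓝[>] x₀, φ x - φ x₀ ≤ c * (x - x₀)) : deriv φ x₀ ≤ c := by
  have hs : Tendsto (slope φ x₀) (𝓝[>] x₀) (𝓝 (deriv φ x₀)) :=
    (hasDerivAt_iff_tendsto_slope.mp hd.hasDerivAt).mono_left
      (nhdsWithin_mono _ fun x hx => ne_of_gt hx)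
  refine le_of_tendsto hs ?_
  filter_upwards [h, self_mem_nhdsWithin] with x hx hx'
  rw [slope_def_field, div_le_iff₀ (sub_pos.mpr hx')]
  linarith

private lemma deriv_ge_right {φ : ℝ → ℝ} {x₀ c : ℝ} (hd : DifferentiableAt ℝ φ x₀)
    (h : ∀ᶠ x in 𝓝[>] x₀, c * (x - x₀) ≤ φ x - φ x₀) : c ≤ deriv φ x₀ := by
  have hs : Tendsto (slope φ x₀) (𝓝[>] x₀) (𝓝 (deriv φ x₀)) :=
    (hasDerivAt_iff_tendsto_slope.mp hd.hasDerivAt).mono_left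
      (nhdsWithin_mono _ fun x hx => ne_of_gt hx)
  refine ge_of_tendsto hs ?_
  filter_upwards [h, self_mem_nhdsWithin] with x hx hx'
  rw [slope_def_field, le_div_iff₀ (sub_pos.mpr hx')]
  linarith

private lemma deriv_le_left {φ : ℝ → ℝ} {x₀ c : ℝ} (hd : DifferentiableAt ℝ φ x₀)
    (h : ∀ᶠ x in 𝓝[<] x₀, c * (x - x₀) ≤ φ x - φ x₀) : deriv φ x₀ ≤ c := by
  have hs : Tendsto (slope φ x₀) (𝓝[<] x₀) (𝓝 (deriv φ x₀)) :=
    (hasDerivAt_iff_tendsto_slope.mp hd.hasDerivAt).mono_left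
      (nhdsWithin_mono _ fun x hx => ne_of_lt hx)
  refine le_of_tendsto hs ?_
  filter_upwards [h, self_mem_nhdsWithin] with x hx hx'
  rw [slope_def_field, div_le_iff_of_neg (sub_neg.mpr hx')]
  linarith

private lemma deriv_ge_left {φ : ℝ → ℝ} {x₀ c : ℝ} (hd : DifferentiableAt ℝ φ x₀)
    (h : ∀ᶠ x in 𝓝[<] x₀, φ x - φ x₀ ≤ c * (x - x₀)) : c ≤ deriv φ x₀ := by
  have hs : Tendsto (slope φ x₀) (𝓝[<] x₀) (𝓝 (deriv φ x₀)) :=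
    (hasDerivAt_iff_tendsto_slope.mp hd.hasDerivAt).mono_left
      (nhdsWithin_mono _ fun x hx => ne_of_lt hx)
  refine ge_of_tendsto hs ?_
  filter_upwards [h, self_mem_nhdsWithin] with x hx hx'
  rw [slope_def_field, le_div_iff_of_neg (sub_neg.mpr hx')]
  linarith

private lemma deriv2_nonpos_of_isLocalMax {f : ℝ → ℝ} (hf : ContDiff ℝ 2 f) {x₀ : ℝ}
    (h : IsLocalMax f x₀) : deriv (deriv f) x₀ ≤ 0 := by
  by_contra hcpos
  push_neg at hcpos
  have hf' : ContDiff ℝ (1 + 1) f := by exact_mod_cast hf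
  have hf1 : ContDiff ℝ 1 (deriv f) := (contDiff_succ_iff_deriv.mp hf').2.2
  have hfd : Differentiable ℝ f := (contDiff_succ_iff_deriv.mp hf').1
  have hdf : Differentiable ℝ (deriv f) := hf1.differentiable one_ne_zero
  have hcont : Continuous (deriv (deriv f)) := hf1.continuous_deriv le_rfl
  have h0 : deriv f x₀ = 0 := h.deriv_eq_zero
  have hev : ∀ᶠ x in 𝓝 x₀, f x ≤ f x₀ ∧ 0 < deriv (deriv f) x :=
    h.and (continuousAt_const.eventually_lt hcont.continuousAt hcpos)
  obtain ⟨ε, hε, hball⟩ := Metric.eventually_nhds_iff.mp hev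
  have hmono' : StrictMonoOn (deriv f) (Icc x₀ (x₀ + ε/2)) := by
    apply strictMonoOn_of_deriv_pos (convex_Icc _ _) hdf.continuous.continuousOn
    intro x hx
    rw [interior_Icc] at hx
    refine (hball ?_).2
    rw [Real.dist_eq, abs_of_pos (sub_pos.mpr hx.1)]
    linarith [hx.2]
  have hderivpos : ∀ x ∈ interior (Icc x₀ (x₀ + ε/2)), 0 < deriv f x := by
    intro x hx
    rw [interior_Icc] at hx
    have := hmono' (left_mem_Icc.mpr (by linarith)) ⟨hx.1.le, hx.2.le⟩ hx.1
    rwa [h0] at this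
  have hmono : StrictMonoOn f (Icc x₀ (x₀ + ε/2)) :=
    strictMonoOn_of_deriv_pos (convex_Icc _ _) hfd.continuous.continuousOn hderivpos
  have h1 : f x₀ < f (x₀ + ε/2) :=
    hmono (left_mem_Icc.mpr (by linarith)) (right_mem_Icc.mpr (by linarith)) (by linarith)
  have h2 : f (x₀ + ε/2) ≤ f x₀ := by
    refine (hball ?_).1
    rw [Real.dist_eq, show x₀ + ε/2 - x₀ = ε/2 by ring, abs_of_pos (by linarith)]
    linarith
  linarith

private lemma deriv2_nonneg_of_isLocalMin {f : ℝ → ℝ} (hf : ContDiff ℝ 2 f) {x₀ : ℝ}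
    (h : IsLocalMin f x₀) : 0 ≤ deriv (deriv f) x₀ := by
  have h2 := deriv2_nonpos_of_isLocalMax (f := fun x => -f x) hf.neg h.neg
  have e1 : deriv (fun x => -f x) = fun x => -deriv f x := funext fun x => deriv.neg
  rw [e1] at h2
  rw [show deriv (fun x => -deriv f x) x₀ = -deriv (deriv f) x₀ from deriv.neg] at h2
  linarith

private lemma key_lin_min {φ : ℝ → ℝ} {x₀ s : ℝ} (hφ : ContDiff ℝ 2 φ)
    (hloc : ∀ᶠ x in 𝓝 x₀, φ x - φ x₀ ≤ s * (x - x₀)) :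
    deriv φ x₀ = s ∧ deriv (deriv φ) x₀ ≤ 0 := by
  have hφd : Differentiable ℝ φ := hφ.differentiable two_ne_zero
  have hmax : IsLocalMax (fun x => φ x - s * x) x₀ := by
    have hevm : ∀ᶠ x in 𝓝 x₀, φ x - s * x ≤ φ x₀ - s * x₀ := by
      filter_upwards [hloc] with x hx
      have : s * (x - x₀) = s * x - s * x₀ := by ring
      linarith
    exact hevm
  have hsm : ContDiff ℝ 2 (fun x => φ x - s * x) := hφ.sub (contDiff_const.mul contDiff_id)
  have hderiv : deriv (fun x => φ x - s * x) = fun x => deriv φ x - s := by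
    funext x
    rw [deriv_fun_sub (hφd x) (by fun_prop), deriv_const_mul _ differentiableAt_fun_id, deriv_id'',
      mul_one]
  have h1 : deriv φ x₀ = s := by
    have h0 := hmax.deriv_eq_zero
    rw [hderiv] at h0
    simp at h0
    linarith
  refine ⟨h1, ?_⟩
  have h2 := deriv2_nonpos_of_isLocalMax hsm hmax
  rw [hderiv] at h2
  rwa [deriv_sub_const] at h2

private lemma key_lin_max {φ : ℝ → ℝ} {x₀ s : ℝ} (hφ : ContDiff ℝ 2 φ)
    (hloc : ∀ᶠ x in 𝓝 x₀, s * (x - x₀) ≤ φ x - φ x₀) :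
    deriv φ x₀ = s ∧ 0 ≤ deriv (deriv φ) x₀ := by
  have hφd : Differentiable ℝ φ := hφ.differentiable two_ne_zero
  have hmin : IsLocalMin (fun x => φ x - s * x) x₀ := by
    have hevm : ∀ᶠ x in 𝓝 x₀, φ x₀ - s * x₀ ≤ φ x - s * x := by
      filter_upwards [hloc] with x hx
      have : s * (x - x₀) = s * x - s * x₀ := by ring
      linarith
    exact hevm
  have hsm : ContDiff ℝ 2 (fun x => φ x - s * x) := hφ.sub (contDiff_const.mul contDiff_id)
  have hderiv : deriv (fun x => φ x - s * x) = fun x => deriv φ x - s := by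
    funext x
    rw [deriv_fun_sub (hφd x) (by fun_prop), deriv_const_mul _ differentiableAt_fun_id, deriv_id'',
      mul_one]
  have h1 : deriv φ x₀ = s := by
    have h0 := hmin.deriv_eq_zero
    rw [hderiv] at h0
    simp at h0
    linarith
  refine ⟨h1, ?_⟩
  have h2 := deriv2_nonneg_of_isLocalMin hsm hmin
  rw [hderiv] at h2
  rwa [deriv_sub_const] at h2

private lemma abs_deriv_le_one_above {t x₀ : ℝ} {φ : ℝ → ℝ} (ht1 : 1/2 ≤ t)
    (hd : DifferentiableAt ℝ φ x₀)
    (h : ∀ᶠ x in 𝓝 x₀, uT t x - φ x ≤ uT t x₀ - φ x₀) : |deriv φ x₀| ≤ 1 := by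
  rw [abs_le]
  constructor
  · apply deriv_ge_right hd
    filter_upwards [h.filter_mono nhdsWithin_le_nhds, self_mem_nhdsWithin] with x hx hx'
    have h2 := (abs_le.mp (uT_lip ht1 x x₀)).1
    have h3 : |x - x₀| = x - x₀ := abs_of_pos (sub_pos.mpr hx')
    linarith
  · apply deriv_le_left hd
    filter_upwards [h.filter_mono nhdsWithin_le_nhds, self_mem_nhdsWithin] with x hx hx'
    have h2 := (abs_le.mp (uT_lip ht1 x x₀)).1
    have h3 : |x - x₀| = -(x - x₀) := abs_of_neg (sub_neg.mpr hx')
    linarith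

private lemma abs_deriv_le_one_below {t x₀ : ℝ} {φ : ℝ → ℝ} (ht1 : 1/2 ≤ t)
    (hd : DifferentiableAt ℝ φ x₀)
    (h : ∀ᶠ x in 𝓝 x₀, uT t x₀ - φ x₀ ≤ uT t x - φ x) : |deriv φ x₀| ≤ 1 := by
  rw [abs_le]
  constructor
  · apply deriv_ge_left hd
    filter_upwards [h.filter_mono nhdsWithin_le_nhds, self_mem_nhdsWithin] with x hx hx'
    have h2 := (abs_le.mp (uT_lip ht1 x x₀)).2
    have h3 : |x - x₀| = -(x - x₀) := abs_of_neg (sub_neg.mpr hx')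
    linarith
  · apply deriv_le_right hd
    filter_upwards [h.filter_mono nhdsWithin_le_nhds, self_mem_nhdsWithin] with x hx hx'
    have h2 := (abs_le.mp (uT_lip ht1 x x₀)).2
    have h3 : |x - x₀| = x - x₀ := abs_of_pos (sub_pos.mpr hx')
    linarith

theorem stmt14 (t : ℝ) (ht : t ∈ Set.Icc (1/2 : ℝ) 1) :
    LipschitzOnWith 1 (uT t) (Set.Icc (-1) 1) ∧
    sSup (uT t '' Set.Icc (-1) 1) + sInf (uT t '' Set.Icc (-1) 1) = 0 ∧
    (∀ x₀ ∈ Set.Ioo (0:ℝ) 1, ∀ φ : ℝ → ℝ, ContDiff ℝ 2 φ →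
      (IsLocalMax (fun x => uT t x - φ x) x₀ →
        min (|deriv φ x₀| - 1) (-(deriv (deriv φ) x₀ * deriv φ x₀ ^ 2)) ≤ 0) ∧
      (IsLocalMin (fun x => uT t x - φ x) x₀ →
        0 ≤ min (|deriv φ x₀| - 1) (-(deriv (deriv φ) x₀ * deriv φ x₀ ^ 2)))) ∧
    (∀ x₀ ∈ Set.Ioo (-1:ℝ) 0, ∀ φ : ℝ → ℝ, ContDiff ℝ 2 φ →
      (IsLocalMax (fun x => uT t x - φ x) x₀ →
        max (1 - |deriv φ x₀|) (-(deriv (deriv φ) x₀ * deriv φ x₀ ^ 2)) ≤ 0) ∧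
      (IsLocalMin (fun x => uT t x - φ x) x₀ →
        0 ≤ max (1 - |deriv φ x₀|) (-(deriv (deriv φ) x₀ * deriv φ x₀ ^ 2)))) := by
  obtain ⟨ht1, ht2⟩ := ht
  refine ⟨?_, ?_, ?_, ?_⟩
  · -- Lipschitz
    rw [lipschitzOnWith_iff_dist_le_mul]
    intro x _ y _
    rw [Real.dist_eq, Real.dist_eq, NNReal.coe_one, one_mul]
    exact uT_lip ht1 x y
  · -- sSup + sInf = 0
    have hmemt : uT t t = t := by
      unfold uT
      split_ifs with h1 h2
      · linarith
      · rfl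
      · simp
    have hmemnt : uT t (-t) = -t := by
      unfold uT
      rw [if_pos (by linarith)]
      simp
    have hub : ∀ x ∈ Icc (-1:ℝ) 1, uT t x ≤ t := by
      intro x hx
      rw [uT_eq ht1]
      rcases le_total x t with h | h
      · exact le_trans (min_le_left _ _) (max_le h (by linarith [hx.1]))
      · exact le_trans (min_le_right _ _) (by linarith)
    have hlb : ∀ x ∈ Icc (-1:ℝ) 1, -t ≤ uT t x := by
      intro x hx
      rw [uT_eq ht1]
      refine le_min ?_ (by linarith [hx.2])
      rcases le_total x (-t) with h | h
      · exact le_trans (by linarith) (le_max_right _ _)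
      · exact le_trans h (le_max_left _ _)
    have hsup : sSup (uT t '' Icc (-1) 1) = t :=
      IsGreatest.csSup_eq ⟨⟨t, ⟨by linarith, ht2⟩, hmemt⟩,
        by rintro y ⟨x, hx, rfl⟩; exact hub x hx⟩
    have hinf : sInf (uT t '' Icc (-1) 1) = -t :=
      IsLeast.csInf_eq ⟨⟨-t, ⟨by linarith, by linarith⟩, hmemnt⟩,
        by rintro y ⟨x, hx, rfl⟩; exact hlb x hx⟩
    rw [hsup, hinf]; ring
  · -- positive side (0,1)
    intro x₀ hx₀ φ hφ
    obtain ⟨hx1, hx2⟩ := hx₀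
    have hd : DifferentiableAt ℝ φ x₀ := (hφ.differentiable two_ne_zero).differentiableAt
    constructor
    · intro hmax
      have habs := abs_deriv_le_one_above ht1 hd hmax
      exact le_trans (min_le_left _ _) (by linarith)
    · intro hmin
      have hmin' : ∀ᶠ x in 𝓝 x₀, uT t x₀ - φ x₀ ≤ uT t x - φ x := hmin
      rcases lt_trichotomy x₀ t with hc | hc | hc
      · -- uT = id near x₀
        have hev : ∀ᶠ x in 𝓝 x₀, uT t x = x := by
          filter_upwards [Ioo_mem_nhds (show -(1/2:ℝ) < x₀ by linarith) hc] with x hx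
          unfold uT
          split_ifs with h1 h2
          · exact absurd h1 (not_le.mpr (by linarith [hx.1]))
          · rfl
          · rw [abs_of_nonpos (by linarith [hx.2])]; ring
        have h0 : uT t x₀ = x₀ := hev.self_of_nhds
        have hloc : ∀ᶠ x in 𝓝 x₀, φ x - φ x₀ ≤ 1 * (x - x₀) := by
          filter_upwards [hmin', hev] with x e1 e2
          rw [e2, h0] at e1; linarith
        obtain ⟨hd1, hd2⟩ := key_lin_min hφ hloc
        rw [hd1]
        refine le_min (by norm_num) (by nlinarith)
      · -- x₀ = t : corner, no touching from below
        have hev : ∀ᶠ x in 𝓝 x₀, uT t x = t - |x - t| := by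
          filter_upwards [Ioi_mem_nhds (show -(1/2:ℝ) < x₀ by linarith)] with x hx
          unfold uT
          split_ifs with h1 h2
          · exact absurd h1 (not_le.mpr hx)
          · rw [abs_of_nonpos (by linarith)]; ring
          · rfl
        have h0 : uT t x₀ = t := by
          rw [hev.self_of_nhds, hc]; simp
        have hup : deriv φ x₀ ≤ -1 := by
          apply deriv_le_right hd
          filter_upwards [hmin'.filter_mono nhdsWithin_le_nhds,
            hev.filter_mono nhdsWithin_le_nhds, self_mem_nhdsWithin] with x e1 e2 e3
          rw [e2, h0] at e1
          have e4 : |x - t| = x - t := abs_of_pos (by rw [← hc]; exact sub_pos.mpr e3)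
          linarith
        have hlo : (1:ℝ) ≤ deriv φ x₀ := by
          apply deriv_ge_left hd
          filter_upwards [hmin'.filter_mono nhdsWithin_le_nhds,
            hev.filter_mono nhdsWithin_le_nhds, self_mem_nhdsWithin] with x e1 e2 e3
          rw [e2, h0] at e1
          have e4 : |x - t| = -(x - t) := abs_of_neg (by rw [← hc]; exact sub_neg.mpr e3)
          linarith
        linarith
      · -- t < x₀
        have hev : ∀ᶠ x in 𝓝 x₀, uT t x = 2*t - x := by
          filter_upwards [Ioi_mem_nhds hc] with x hx
          unfold uT
          split_ifs with h1 h2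
          · exact absurd h1 (not_le.mpr (by linarith [mem_Ioi.mp hx]))
          · exact absurd h2 (not_lt.mpr (by linarith [mem_Ioi.mp hx]))
          · rw [abs_of_nonneg (by linarith [mem_Ioi.mp hx])]; ring
        have h0 : uT t x₀ = 2*t - x₀ := hev.self_of_nhds
        have hloc : ∀ᶠ x in 𝓝 x₀, φ x - φ x₀ ≤ (-1) * (x - x₀) := by
          filter_upwards [hmin', hev] with x e1 e2
          rw [e2, h0] at e1; linarith
        obtain ⟨hd1, hd2⟩ := key_lin_min hφ hloc
        rw [hd1]
        refine le_min (by norm_num) (by nlinarith)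
  · -- negative side (-1,0)
    intro x₀ hx₀ φ hφ
    obtain ⟨hx1, hx2⟩ := hx₀
    have hd : DifferentiableAt ℝ φ x₀ := (hφ.differentiable two_ne_zero).differentiableAt
    constructor
    · intro hmax
      have hmax' : ∀ᶠ x in 𝓝 x₀, uT t x - φ x ≤ uT t x₀ - φ x₀ := hmax
      rcases lt_trichotomy x₀ (-t) with hc | hc | hc
      · -- x₀ < -t
        have hev : ∀ᶠ x in 𝓝 x₀, uT t x = -x - 2*t := by
          filter_upwards [Iio_mem_nhds hc] with x hx
          have hx' : x < -t := mem_Iio.mp hx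
          unfold uT
          rw [if_pos (by linarith), abs_of_neg (by linarith)]
          ring
        have h0 : uT t x₀ = -x₀ - 2*t := hev.self_of_nhds
        have hloc : ∀ᶠ x in 𝓝 x₀, (-1) * (x - x₀) ≤ φ x - φ x₀ := by
          filter_upwards [hmax', hev] with x e1 e2
          rw [e2, h0] at e1; linarith
        obtain ⟨hd1, hd2⟩ := key_lin_max hφ hloc
        rw [hd1]
        refine max_le (by norm_num) (by nlinarith)
      · -- x₀ = -t : corner, no touching from above
        have hev : ∀ᶠ x in 𝓝 x₀, uT t x = |x + t| - t := by
          filter_upwards [Iio_mem_nhds (show x₀ < (1/2:ℝ) by linarith)] with x hx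
          have hx' : x < 1/2 := mem_Iio.mp hx
          unfold uT
          rcases le_or_gt x (-(1/2)) with h1 | h1
          · rw [if_pos h1]
          · rw [if_neg (not_le.mpr h1), if_pos hx', abs_of_pos (by linarith)]; ring
        have h0 : uT t x₀ = -t := by
          rw [hev.self_of_nhds, hc]; simp
        have hlo : (1:ℝ) ≤ deriv φ x₀ := by
          apply deriv_ge_right hd
          filter_upwards [hmax'.filter_mono nhdsWithin_le_nhds,
            hev.filter_mono nhdsWithin_le_nhds, self_mem_nhdsWithin] with x e1 e2 e3
          rw [e2, h0] at e1
          have e4 : |x + t| = x + t := abs_of_pos (by rw [mem_Ioi, hc] at e3; linarith)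
          linarith [hc]
        have hup : deriv φ x₀ ≤ -1 := by
          apply deriv_le_left hd
          filter_upwards [hmax'.filter_mono nhdsWithin_le_nhds,
            hev.filter_mono nhdsWithin_le_nhds, self_mem_nhdsWithin] with x e1 e2 e3
          rw [e2, h0] at e1
          have e4 : |x + t| = -(x + t) := abs_of_neg (by rw [mem_Iio, hc] at e3; linarith)
          linarith [hc]
        linarith
      · -- -t < x₀
        have hev : ∀ᶠ x in 𝓝 x₀, uT t x = x := by
          filter_upwards [Ioo_mem_nhds hc (show x₀ < (1/2:ℝ) by linarith)] with x hx
          unfold uT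
          split_ifs with h1 h2
          · rw [abs_of_pos (by linarith [hx.1])]; ring
          · rfl
          · exact absurd h2 (not_not_intro hx.2)
        have h0 : uT t x₀ = x₀ := hev.self_of_nhds
        have hloc : ∀ᶠ x in 𝓝 x₀, (1:ℝ) * (x - x₀) ≤ φ x - φ x₀ := by
          filter_upwards [hmax', hev] with x e1 e2
          rw [e2, h0] at e1; linarith
        obtain ⟨hd1, hd2⟩ := key_lin_max hφ hloc
        rw [hd1]
        refine max_le (by norm_num) (by nlinarith)
    · intro hmin
      have habs := abs_deriv_le_one_below ht1 hd hmin
      exact le_trans (by linarith) (le_max_left _ _)
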